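/- arXiv:1604.07535 — 5 statements merged into one kernel-verified Lean document; each statement's English description precedes it below -/
import Mathlib

section
/- Let S be a finite set of lists of Booleans, each of length at most h, and let p be the cardinality of S. Then the set of all prefixes of members of S (a list t is a prefix of s if s = t ++ r for some list r; this includes the empty list when S is nonempty, and each member of S itself) has cardinality at most the sum over l = 0, 1, …, h of min(2^l, p). -/
/-- Counting fact behind Lemma 5: identifying nodes of the complete binary tree
with lists of Booleans, the union of the root-to-node paths of `p = |S|` nodes,
each of depth at most `h`, i.e. the set of all prefixes of members of `S`,
has at most `∑_{l=0}^{h} min(2^l, p)` elements. -/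
theorem stmt_6 (S : Finset (List Bool)) (h : ℕ) (hlen : ∀ s ∈ S, s.length ≤ h)
    (p : ℕ) (hp : p = S.card) :
    Set.ncard {t : List Bool | ∃ s ∈ S, t <+: s} ≤
      ∑ l ∈ Finset.range (h + 1), min (2 ^ l) p := by
  set T : Finset (List Bool) := S.biUnion (fun s => s.inits.toFinset) with hT
  have hset : {t : List Bool | ∃ s ∈ S, t <+: s} = ↑T := by
    ext t
    simp [hT, List.mem_inits]
  rw [hset, Set.ncard_coe_finset]
  have hmem : ∀ t ∈ T, t.length ∈ Finset.range (h + 1) := by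
    intro t ht
    simp only [hT, Finset.mem_biUnion, List.mem_toFinset, List.mem_inits] at ht
    obtain ⟨s, hs, hts⟩ := ht
    simp only [Finset.mem_range, Nat.lt_succ_iff]
    exact le_trans hts.length_le (hlen s hs)
  rw [Finset.card_eq_sum_card_fiberwise hmem]
  apply Finset.sum_le_sum
  intro l _
  apply le_min
  · -- at most 2^l lists of length l
    have : T.filter (fun t => t.length = l) ⊆
        (Finset.univ : Finset (List.Vector Bool l)).image (fun v => v.toList) := by
      intro t ht
      simp only [Finset.mem_filter] at ht
      simp only [Finset.mem_image, Finset.mem_univ, true_and]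
      exact ⟨⟨t, ht.2⟩, rfl⟩
    calc (T.filter (fun t => t.length = l)).card
        ≤ _ := Finset.card_le_card this
      _ ≤ (Finset.univ : Finset (List.Vector Bool l)).card := Finset.card_image_le
      _ = 2 ^ l := by simp [Finset.card_univ, card_vector]
  · -- at most p = |S|
    have : T.filter (fun t => t.length = l) ⊆ S.image (fun s => s.take l) := by
      intro t ht
      simp only [Finset.mem_filter, hT, Finset.mem_biUnion, List.mem_toFinset,
        List.mem_inits] at ht
      obtain ⟨⟨s, hs, hts⟩, hlen'⟩ := ht
      simp only [Finset.mem_image]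
      refine ⟨s, hs, ?_⟩
      rw [List.prefix_iff_eq_take] at hts
      rw [← hlen', ← hts]
    calc (T.filter (fun t => t.length = l)).card
        ≤ _ := Finset.card_le_card this
      _ ≤ S.card := Finset.card_image_le
      _ = p := hp.symm
end

section
/- Let h and p be natural numbers with 1 ≤ p ≤ 2^h, and let k = ⌊log₂ p⌋ (i.e., k = Nat.log 2 p). Then the sum over l = 0, 1, …, h of min(2^l, p) is at most p·(h − k) + 2·p. -/
/-- Arithmetic bound completing Lemma 5: for `1 ≤ p ≤ 2^h` and
`k = ⌊log₂ p⌋`, one has `∑_{l=0}^{h} min(2^l, p) ≤ p·(h − k) + 2·p`. -/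
theorem stmt_7 (h p : ℕ) (hp1 : 1 ≤ p) (hp2 : p ≤ 2 ^ h) :
    ∑ l ∈ Finset.range (h + 1), min (2 ^ l) p ≤ p * (h - Nat.log 2 p) + 2 * p := by
  set k := Nat.log 2 p with hk
  have hkh : k ≤ h := by
    rw [hk]
    calc Nat.log 2 p ≤ Nat.log 2 (2 ^ h) := Nat.log_mono_right hp2
    _ = h := Nat.log_pow one_lt_two h
  have hsplit : ∑ l ∈ Finset.range (h + 1), min (2 ^ l) p
      = ∑ l ∈ Finset.range (k + 1), min (2 ^ l) p
        + ∑ l ∈ Finset.Ico (k + 1) (h + 1), min (2 ^ l) p := by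
    rw [Finset.range_eq_Ico]
    rw [Finset.range_eq_Ico]; exact (Finset.sum_Ico_consecutive (fun l => min (2 ^ l) p) (Nat.zero_le (k + 1)) (by omega : k + 1 ≤ h + 1)).symm
  rw [hsplit]
  have h1 : ∑ l ∈ Finset.range (k + 1), min (2 ^ l) p ≤ 2 * p := by
    calc ∑ l ∈ Finset.range (k + 1), min (2 ^ l) p
        ≤ ∑ l ∈ Finset.range (k + 1), 2 ^ l :=
          Finset.sum_le_sum fun i _ => min_le_left _ _
      _ = 2 ^ (k + 1) - 1 := by
          rw [Nat.geomSum_eq (le_refl 2)]; simp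
      _ ≤ 2 ^ (k + 1) := Nat.sub_le _ _
      _ = 2 * 2 ^ k := by ring
      _ ≤ 2 * p := by
          have := Nat.pow_log_le_self 2 (by omega : p ≠ 0)
          rw [← hk] at this
          omega
  have h2 : ∑ l ∈ Finset.Ico (k + 1) (h + 1), min (2 ^ l) p ≤ p * (h - k) := by
    calc ∑ l ∈ Finset.Ico (k + 1) (h + 1), min (2 ^ l) p
        ≤ ∑ _l ∈ Finset.Ico (k + 1) (h + 1), p :=
          Finset.sum_le_sum fun i _ => min_le_right _ _
      _ = (h - k) * p := by
          rw [Finset.sum_const, Nat.card_Ico, smul_eq_mul]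
          congr 1
          omega
      _ = p * (h - k) := Nat.mul_comm _ _
  omega
end

section
/- Let V be a nonempty finite set of real numbers and let w : ℝ → ℝ satisfy w(v) > 0 for every v ∈ V. Then the infimum over all real c of max_{v ∈ V} w(v)·|v − c| is attained at some c*, and there exist a, b ∈ V with a ≤ b such that this minimum value equals (b − a)·w(a)·w(b)/(w(a) + w(b)). -/
/-- One-center candidate-value principle on the real line (Kariv–Hakimi):
the minimum over center locations `c` of the largest weighted cost
`max_{v ∈ V} w(v)·|v − c|` is attained, and its value equals
`(b − a)·w(a)·w(b)/(w(a) + w(b))` for some `a ≤ b` in `V`. -/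
theorem stmt_12 (V : Finset ℝ) (hV : V.Nonempty) (w : ℝ → ℝ)
    (hw : ∀ v ∈ V, 0 < w v) :
    ∃ cstar : ℝ,
      (∀ c : ℝ, V.sup' hV (fun v => w v * |v - cstar|) ≤
        V.sup' hV (fun v => w v * |v - c|)) ∧
      ∃ a ∈ V, ∃ b ∈ V, a ≤ b ∧
        V.sup' hV (fun v => w v * |v - cstar|) = (b - a) * w a * w b / (w a + w b) := by
  have hVV : (V ×ˢ V).Nonempty := hV.product hV
  set K : ℝ × ℝ → ℝ := fun p => (p.2 - p.1) * w p.1 * w p.2 / (w p.1 + w p.2) with hKdef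
  obtain ⟨p, hpmem, hpK⟩ := Finset.exists_mem_eq_sup' hVV K
  obtain ⟨a, b⟩ := p
  rw [Finset.mem_product] at hpmem
  obtain ⟨haV', hbV'⟩ := hpmem
  replace haV : a ∈ V := haV'
  replace hbV : b ∈ V := hbV'
  have hwa := hw a haV
  have hwb := hw b hbV
  have hs : (0:ℝ) < w a + w b := by linarith
  set T := (b - a) * w a * w b / (w a + w b) with hT
  have hTsup : (V ×ˢ V).sup' hVV K = T := hpK
  have hab : a ≤ b := by
    by_contra h
    push_neg at h
    have hmem : (a, a) ∈ V ×ˢ V := Finset.mem_product.mpr ⟨haV, haV⟩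
    have h0 : K (a, a) ≤ T := hTsup ▸ Finset.le_sup' K hmem
    have hKaa : K (a, a) = 0 := by simp [hKdef]
    have hTneg : T < 0 := by
      rw [hT]
      apply div_neg_of_neg_of_pos _ hs
      nlinarith [mul_pos (sub_pos.mpr h) (mul_pos hwa hwb)]
    rw [hKaa] at h0
    linarith
  set c0 := (w a * a + w b * b) / (w a + w b) with hc0
  have hca : w a * (c0 - a) = T := by
    rw [hc0, hT]
    field_simp
    ring
  have hbc : w b * (b - c0) = T := by
    rw [hc0, hT]
    field_simp
    ring
  have hT0 : 0 ≤ T := by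
    rw [hT]
    apply div_nonneg _ hs.le
    nlinarith [mul_nonneg (mul_nonneg (sub_nonneg.mpr hab) hwa.le) hwb.le]
  have hac0 : a ≤ c0 := by nlinarith
  have hc0b : c0 ≤ b := by nlinarith
  have hub : ∀ v ∈ V, w v * |v - c0| ≤ T := by
    intro v hvV
    have hwv := hw v hvV
    rcases le_total v c0 with hvc | hvc
    · rw [abs_of_nonpos (by linarith)]
      have hmem : (v, b) ∈ V ×ˢ V := Finset.mem_product.mpr ⟨hvV, hbV⟩
      have hKvb : K (v, b) ≤ T := hTsup ▸ Finset.le_sup' K hmem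
      have h1 : (b - v) * w v * w b ≤ T * (w v + w b) := by
        have hpos : (0:ℝ) < w v + w b := by linarith
        have := (div_le_iff₀ hpos).mp hKvb
        linarith
      nlinarith [hbc, h1, mul_pos hwv hwb]
    · rw [abs_of_nonneg (by linarith)]
      have hmem : (a, v) ∈ V ×ˢ V := Finset.mem_product.mpr ⟨haV, hvV⟩
      have hKav : K (a, v) ≤ T := hTsup ▸ Finset.le_sup' K hmem
      have h1 : (v - a) * w a * w v ≤ T * (w a + w v) := by
        have hpos : (0:ℝ) < w a + w v := by linarith
        have := (div_le_iff₀ hpos).mp hKav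
        linarith
      nlinarith [hca, h1, mul_pos hwa hwv]
  have hfc0 : V.sup' hV (fun v => w v * |v - c0|) = T := by
    apply le_antisymm
    · exact Finset.sup'_le hV _ hub
    · have hval : w a * |a - c0| = T := by
        rw [abs_of_nonpos (by linarith), ← hca]
        ring
      calc T = w a * |a - c0| := hval.symm
        _ ≤ _ := Finset.le_sup' (fun v => w v * |v - c0|) haV
  refine ⟨c0, ?_, a, haV, b, hbV, hab, by rw [hfc0, hT]⟩
  intro c
  rw [hfc0]
  have h1 : w a * |a - c| ≤ V.sup' hV (fun v => w v * |v - c|) :=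
    Finset.le_sup' (fun v => w v * |v - c|) haV
  have h2 : w b * |b - c| ≤ V.sup' hV (fun v => w v * |v - c|) :=
    Finset.le_sup' (fun v => w v * |v - c|) hbV
  set m := V.sup' hV (fun v => w v * |v - c|) with hm
  have htri : b - a ≤ |a - c| + |b - c| := by
    have h3 := le_abs_self (b - c)
    have h4 := neg_abs_le (a - c)
    linarith
  rw [hT, div_le_iff₀ hs]
  nlinarith [mul_le_mul_of_nonneg_right h1 hwb.le,
    mul_le_mul_of_nonneg_right h2 hwa.le,
    mul_le_mul_of_nonneg_right htri (mul_pos hwa hwb).le]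
end

section
/- Let V be a nonempty finite set of real numbers, let w : ℝ → ℝ satisfy w(v) > 0 for every v ∈ V, and let p ≥ 1 be a natural number. Consider the objective G(C) = max_{v ∈ V} min_{c ∈ C} w(v)·|v − c| over nonempty finite sets C of reals with |C| ≤ p. Then the infimum of G over all such C is attained, and its value equals (b − a)·w(a)·w(b)/(w(a) + w(b)) for some a, b ∈ V with a ≤ b (the case a = b giving the value 0, which occurs in particular when p ≥ |V|). -/
open Finset

/-- Helly-type replacement lemma: from any cover at level `β`, build a cover
(with no more centers) at any level `μ ≥ 0` that dominates all candidate values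
that are `≤ β`. -/
lemma kh_stepA (V : Finset ℝ) (w : ℝ → ℝ) (hw : ∀ v ∈ V, 0 < w v)
    (p : ℕ) (β : ℝ)
    (C : Finset ℝ) (hCcard : C.card ≤ p)
    (hcov : ∀ v ∈ V, ∃ c ∈ C, w v * |v - c| ≤ β)
    (μ : ℝ) (hμ0 : 0 ≤ μ)
    (H : ∀ a ∈ V, ∀ b ∈ V, a ≤ b → (b - a) * w a * w b / (w a + w b) ≤ β →
      (b - a) * w a * w b / (w a + w b) ≤ μ)
    (hVne : V.Nonempty) :
    ∃ C' : Finset ℝ, C'.Nonempty ∧ C'.card ≤ p ∧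
      ∀ v ∈ V, ∃ c ∈ C', w v * |v - c| ≤ μ := by
  classical
  -- choose an assigned center for each vertex
  have hcov' : ∀ v : ℝ, ∃ c : ℝ, v ∈ V → c ∈ C ∧ w v * |v - c| ≤ β := by
    intro v
    by_cases hv : v ∈ V
    · obtain ⟨c, hc, hle⟩ := hcov v hv
      exact ⟨c, fun _ => ⟨hc, hle⟩⟩
    · exact ⟨0, fun h => absurd h hv⟩
  choose cv hcv using hcov'
  -- pairwise compatibility within a cluster
  have pair : ∀ u ∈ V, ∀ v ∈ V, cv u = cv v → u - μ / w u ≤ v + μ / w v := by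
    intro u hu v hv hcev
    have hwu := hw u hu
    have hwv := hw v hv
    rcases le_or_gt u v with huv | huv
    · have h1 : 0 ≤ μ / w u := div_nonneg hμ0 hwu.le
      have h2 : 0 ≤ μ / w v := div_nonneg hμ0 hwv.le
      linarith
    · -- v < u : use the candidate value for the pair (v, u)
      obtain ⟨hcu, hbu⟩ := hcv u hu
      obtain ⟨hcv', hbv⟩ := hcv v hv
      set c := cv u with hc
      have hbv' : w v * |v - c| ≤ β := by rw [hcev]; exact hbv
      have h1 : u - c ≤ β / w u := by
        have : u - c ≤ |u - c| := le_abs_self _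
        have h2 : |u - c| ≤ β / w u := by
          rw [le_div_iff₀ hwu]; linarith [hbu, mul_comm (w u) |u - c|]
        linarith
      have h2 : c - v ≤ β / w v := by
        have h3 : -(v - c) ≤ |v - c| := neg_le_abs _
        have h4 : |v - c| ≤ β / w v := by
          rw [le_div_iff₀ hwv]; linarith [hbv', mul_comm (w v) |v - c|]
        have : c - v = -(v - c) := by ring
        linarith
      have h1' : (u - c) * w u ≤ β := by rwa [← le_div_iff₀ hwu]
      have h2' : (c - v) * w v ≤ β := by rwa [← le_div_iff₀ hwv]
      have hlamβ : (u - v) * w v * w u / (w v + w u) ≤ β := by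
        rw [div_le_iff₀ (by positivity)]
        nlinarith [mul_le_mul_of_nonneg_right h1' hwv.le,
          mul_le_mul_of_nonneg_right h2' hwu.le]
      have hlamμ : (u - v) * w v * w u / (w v + w u) ≤ μ :=
        H v hv u hu huv.le hlamβ
      rw [div_le_iff₀ (by positivity)] at hlamμ
      have e1 : μ / w u * w u = μ := div_mul_cancel₀ _ (ne_of_gt hwu)
      have e2 : μ / w v * w v = μ := div_mul_cancel₀ _ (ne_of_gt hwv)
      nlinarith [hlamμ, mul_pos hwu hwv, e1, e2]
  -- new centers: leftmost feasible point of each cluster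
  set f : ℝ → ℝ := fun u => u - μ / w u with hf
  set h : ℝ → ℝ := fun c =>
    if hS : (V.filter (fun u => cv u = c)).Nonempty then
      (V.filter (fun u => cv u = c)).sup' hS f else 0 with hh
  refine ⟨(V.image cv).image h, (hVne.image cv).image h, ?_, ?_⟩
  · calc ((V.image cv).image h).card ≤ (V.image cv).card := card_image_le
      _ ≤ C.card := card_le_card (by
          intro x hx
          obtain ⟨v, hv, rfl⟩ := mem_image.1 hx
          exact (hcv v hv).1)
      _ ≤ p := hCcard
  · intro v hv
    refine ⟨h (cv v), mem_image.2 ⟨cv v, mem_image.2 ⟨v, hv, rfl⟩, rfl⟩, ?_⟩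
    set S := V.filter (fun u => cv u = cv v) with hS
    have hSne : S.Nonempty := ⟨v, mem_filter.2 ⟨hv, rfl⟩⟩
    have hval : h (cv v) = S.sup' hSne f := dif_pos hSne
    rw [hval]
    have hwv := hw v hv
    have hvS : v ∈ S := mem_filter.2 ⟨hv, rfl⟩
    have h1 : v - μ / w v ≤ S.sup' hSne f := le_sup' f hvS
    have h2 : S.sup' hSne f ≤ v + μ / w v := by
      apply sup'_le
      intro u hu
      obtain ⟨huV, hucv⟩ := mem_filter.1 hu
      exact pair u huV v hv hucv
    have habs : |v - S.sup' hSne f| ≤ μ / w v :=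
      abs_le.2 ⟨by linarith, by linarith⟩
    calc w v * |v - S.sup' hSne f| ≤ w v * (μ / w v) :=
          mul_le_mul_of_nonneg_left habs hwv.le
      _ = μ := by field_simp

/-- Candidate-value principle of Lemma 9 (Kariv–Hakimi) on the real line:
the optimal `p`-center cost
`min_{C, |C| ≤ p} max_{v ∈ V} min_{c ∈ C} w(v)·|v − c|` is attained, and its
value equals `(b − a)·w(a)·w(b)/(w(a) + w(b))` for some `a ≤ b` in `V`. -/
theorem stmt_13 (V : Finset ℝ) (hV : V.Nonempty) (w : ℝ → ℝ)
    (hw : ∀ v ∈ V, 0 < w v) (p : ℕ) (hp : 1 ≤ p) :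
    ∃ (C : Finset ℝ) (hC : C.Nonempty), C.card ≤ p ∧
      (∀ (C' : Finset ℝ) (hC' : C'.Nonempty), C'.card ≤ p →
        V.sup' hV (fun v => C.inf' hC fun c => w v * |v - c|) ≤
          V.sup' hV (fun v => C'.inf' hC' fun c => w v * |v - c|)) ∧
      ∃ a ∈ V, ∃ b ∈ V, a ≤ b ∧
        V.sup' hV (fun v => C.inf' hC fun c => w v * |v - c|)
          = (b - a) * w a * w b / (w a + w b) := by
  classical
  obtain ⟨v₀, hv₀⟩ := hV
  set lam : ℝ → ℝ → ℝ := fun a b => (b - a) * w a * w b / (w a + w b) with hlam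
  set Λ : Finset ℝ :=
    ((V ×ˢ V).filter (fun q => q.1 ≤ q.2)).image (fun q => lam q.1 q.2) with hΛ
  have hzero : (0 : ℝ) ∈ Λ := by
    refine mem_image.2 ⟨(v₀, v₀), mem_filter.2 ⟨mem_product.2 ⟨hv₀, hv₀⟩, le_refl _⟩, ?_⟩
    simp [hlam]
  set feas : ℝ → Prop := fun β => ∃ C : Finset ℝ, C.Nonempty ∧ C.card ≤ p ∧
    ∀ v ∈ V, ∃ c ∈ C, w v * |v - c| ≤ β with hfeas
  -- Step A: any feasible level is dominated below by a feasible candidate value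
  have stepA : ∀ β : ℝ, feas β → ∃ μ ∈ Λ, μ ≤ β ∧ feas μ := by
    rintro β ⟨C, hCne, hCcard, hcov⟩
    have hβ0 : (0 : ℝ) ≤ β := by
      obtain ⟨c, _, hle⟩ := hcov v₀ hv₀
      exact le_trans (mul_nonneg (hw v₀ hv₀).le (abs_nonneg _)) hle
    have hne : (Λ.filter (· ≤ β)).Nonempty := ⟨0, mem_filter.2 ⟨hzero, hβ0⟩⟩
    set μ := (Λ.filter (· ≤ β)).max' hne with hμ
    have hμmem := (Λ.filter (· ≤ β)).max'_mem hne
    have hμΛ : μ ∈ Λ := (mem_filter.1 hμmem).1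
    have hμβ : μ ≤ β := (mem_filter.1 hμmem).2
    have hμ0 : (0 : ℝ) ≤ μ := le_max' (Λ.filter (· ≤ β)) 0 (mem_filter.2 ⟨hzero, hβ0⟩)
    have H : ∀ a ∈ V, ∀ b ∈ V, a ≤ b → lam a b ≤ β → lam a b ≤ μ := by
      intro a ha b hb hab hlb
      exact le_max' (Λ.filter (· ≤ β)) (lam a b) (mem_filter.2
        ⟨mem_image.2 ⟨(a, b), mem_filter.2 ⟨mem_product.2 ⟨ha, hb⟩, hab⟩, rfl⟩, hlb⟩)
    obtain ⟨C', hC'ne, hC'card, hC'cov⟩ :=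
      kh_stepA V w hw p β C hCcard hcov μ hμ0 H ⟨v₀, hv₀⟩
    exact ⟨μ, hμΛ, hμβ, C', hC'ne, hC'card, hC'cov⟩
  -- every admissible center set gives a feasible level
  have hVne : V.Nonempty := ⟨v₀, hv₀⟩
  have feasOf : ∀ (C' : Finset ℝ) (hC' : C'.Nonempty), C'.card ≤ p →
      feas (V.sup' hVne (fun v => C'.inf' hC' fun c => w v * |v - c|)) := by
    intro C' hC' hcard
    refine ⟨C', hC', hcard, fun v hv => ?_⟩
    have h1 : C'.inf' hC' (fun c => w v * |v - c|) ≤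
        V.sup' hVne (fun v => C'.inf' hC' fun c => w v * |v - c|) :=
      le_sup' (fun v => C'.inf' hC' fun c => w v * |v - c|) hv
    obtain ⟨c, hc, hceq⟩ := exists_mem_eq_inf' hC' (fun c => w v * |v - c|)
    exact ⟨c, hc, by rw [← hceq]; exact h1⟩
  -- the set of feasible candidate values is nonempty
  have hfeas₀ : feas (V.sup' hVne fun v => w v * |v - v₀|) := by
    refine ⟨{v₀}, singleton_nonempty _, by simpa using hp, fun v hv => ?_⟩
    exact ⟨v₀, mem_singleton_self _, le_sup' (fun v => w v * |v - v₀|) hv⟩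
  obtain ⟨μ₀, hμ₀Λ, _, hμ₀feas⟩ := stepA _ hfeas₀
  have hFne : (Λ.filter feas).Nonempty := ⟨μ₀, mem_filter.2 ⟨hμ₀Λ, hμ₀feas⟩⟩
  set α := (Λ.filter feas).min' hFne with hα
  have hαmem := (Λ.filter feas).min'_mem hFne
  have hαΛ : α ∈ Λ := (mem_filter.1 hαmem).1
  have hαfeas : feas α := (mem_filter.1 hαmem).2
  obtain ⟨Cs, hCs, hCscard, hCscov⟩ := hαfeas
  set G := V.sup' hVne (fun v => Cs.inf' hCs fun c => w v * |v - c|) with hG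
  -- α is a lower bound for all admissible levels
  have hlow : ∀ (C' : Finset ℝ) (hC' : C'.Nonempty), C'.card ≤ p →
      α ≤ V.sup' hVne (fun v => C'.inf' hC' fun c => w v * |v - c|) := by
    intro C' hC' hcard
    obtain ⟨μ, hμΛ, hμle, hμfeas⟩ := stepA _ (feasOf C' hC' hcard)
    exact le_trans (min'_le _ _ (mem_filter.2 ⟨hμΛ, hμfeas⟩)) hμle
  have hGle : G ≤ α := by
    apply sup'_le
    intro v hv
    obtain ⟨c, hc, hle⟩ := hCscov v hv
    exact inf'_le_of_le _ hc hle
  have hGeq : G = α := le_antisymm hGle (hlow Cs hCs hCscard)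
  obtain ⟨⟨a, b⟩, hab, habeq⟩ := mem_image.1 hαΛ
  obtain ⟨habV, hable⟩ := mem_filter.1 hab
  obtain ⟨haV, hbV⟩ := mem_product.1 habV
  refine ⟨Cs, hCs, hCscard, ?_, a, haV, b, hbV, hable, ?_⟩
  · intro C' hC' hcard
    exact le_trans (le_of_eq hGeq) (hlow C' hC' hcard)
  · rw [show (V.sup' hVne fun v => Cs.inf' hCs fun c => w v * |v - c|) = G from rfl,
      hGeq, ← habeq]
end

section
/- Let V be a finite set of real numbers, let w : ℝ → ℝ satisfy w(v) > 0 for every v ∈ V, let α ≥ 0, and let C be a nonempty finite set of reals such that for every v ∈ V there exists c ∈ C with w(v)·|v − c| ≤ α. Then there exists a function f : V → C such that w(v)·|v − f(v)| ≤ α for every v ∈ V, and every fiber of f is order-convex in V: if u, v ∈ V with f(u) = f(v) and x ∈ V satisfies u ≤ x ≤ v, then f(x) = f(u). Consequently V can be partitioned into at most |C| consecutive subsets, each α-covered by a single center of C. -/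
/-- Path instance of Lemma 2: if a finite set `C` of centers α-covers the
finite vertex set `V ⊆ ℝ`, then each vertex can be assigned to a covering
center so that every fiber of the assignment is order-convex in `V`;
consequently `V` splits into at most `|C|` consecutive parts, each α-covered
by a single center. -/
theorem stmt_14 (V C : Finset ℝ) (w : ℝ → ℝ) (hw : ∀ v ∈ V, 0 < w v)
    (α : ℝ) (hα : 0 ≤ α) (hC : C.Nonempty)
    (hcov : ∀ v ∈ V, ∃ c ∈ C, w v * |v - c| ≤ α) :
    ∃ f : ℝ → ℝ,
      (∀ v ∈ V, f v ∈ C) ∧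
      (∀ v ∈ V, w v * |v - f v| ≤ α) ∧
      (∀ u ∈ V, ∀ v ∈ V, ∀ x ∈ V, f u = f v → u ≤ x → x ≤ v → f x = f u) := by
  have hS : ∀ v : ℝ, (C.filter fun c => ∀ c' ∈ C, |v - c| ≤ |v - c'|).Nonempty := by
    intro v
    obtain ⟨c, hc, hmin⟩ := C.exists_min_image (fun c => |v - c|) hC
    exact ⟨c, Finset.mem_filter.2 ⟨hc, hmin⟩⟩
  set f : ℝ → ℝ := fun v => (C.filter fun c => ∀ c' ∈ C, |v - c| ≤ |v - c'|).min' (hS v)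
    with hf
  have hfC : ∀ v : ℝ, f v ∈ C := fun v =>
    (Finset.mem_filter.1 (Finset.min'_mem _ (hS v))).1
  have hfmin : ∀ v : ℝ, ∀ c' ∈ C, |v - f v| ≤ |v - c'| := fun v =>
    (Finset.mem_filter.1 (Finset.min'_mem _ (hS v))).2
  have hfle : ∀ v : ℝ, ∀ c' ∈ C, |v - c'| ≤ |v - f v| → f v ≤ c' := by
    intro v c' hc' hle
    refine Finset.min'_le _ _ (Finset.mem_filter.2 ⟨hc', fun c'' hc'' => ?_⟩)
    exact hle.trans (hfmin v c'' hc'')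
  refine ⟨f, fun v _ => hfC v, ?_, ?_⟩
  · intro v hv
    obtain ⟨c, hc, hcα⟩ := hcov v hv
    exact le_trans (mul_le_mul_of_nonneg_left (hfmin v c hc) (hw v hv).le) hcα
  · intro u _ v _ x _ huv hux hxv
    set c := f u with hcdef
    set c' := f x with hc'def
    by_contra hne
    have hne' : c' ≠ c := hne
    rcases lt_trichotomy c' c with hlt | heq | hgt
    · -- c' < c : at u, c is strictly closer, so u > midpoint; at x, x ≤ midpoint
      have h1 : ¬ |u - c'| ≤ |u - c| := fun h => absurd (hfle u c' (hfC x) h) (not_le.2 hlt)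
      have h1' : |u - c| < |u - c'| := not_le.1 h1
      have h2 : |x - c'| ≤ |x - c| := hfmin x c (hfC u)
      have hq1 : (u - c)^2 < (u - c')^2 := by
        nlinarith [sq_abs (u - c), sq_abs (u - c'), abs_nonneg (u - c), abs_nonneg (u - c'), h1']
      have hq2 : (x - c')^2 ≤ (x - c)^2 := by
        nlinarith [sq_abs (x - c), sq_abs (x - c'), abs_nonneg (x - c), abs_nonneg (x - c'), h2]
      nlinarith [hq1, hq2, hlt, hux]
    · exact hne' heq
    · -- c < c' : at v, v ≤ midpoint; at x, c' strictly closer, x > midpoint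
      have h1 : |v - c| ≤ |v - c'| := by
        have := hfmin v c' (hfC x)
        rw [← huv] at this
        exact this
      have h2 : ¬ |x - c| ≤ |x - c'| := fun h => absurd (hfle x c (hfC u) h) (not_le.2 hgt)
      have h2' : |x - c'| < |x - c| := not_le.1 h2
      have hq1 : (v - c)^2 ≤ (v - c')^2 := by
        nlinarith [sq_abs (v - c), sq_abs (v - c'), abs_nonneg (v - c), abs_nonneg (v - c'), h1]
      have hq2 : (x - c')^2 < (x - c)^2 := by
        nlinarith [sq_abs (x - c), sq_abs (x - c'), abs_nonneg (x - c), abs_nonneg (x - c'), h2']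
      nlinarith [hq1, hq2, hgt, hxv]
end
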